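/- Let f : ℝ² → ℝ be Q-periodic and Lipschitz with |∇f| ≤ ℓ a.e., let a > 0, set n(x') := (−∇f(x'), 1) ∈ ℝ³, and define Γ_ε(x',y') := (2πε)^{-1} [ n(y'/ε)⊗n(x'/ε) / √(|x'−y'|² + ε²|f(x'/ε)−f(y'/ε)|²) − n(y'/ε)⊗n(x'/ε) / √(|x'−y'|² + ε²|a+f(x'/ε)−f(y'/ε)|²) ]. Then there exists L > 0 depending only on ℓ and a such that |Γ_ε(x',y')| ≤ (L/(2πε)) [ 1/|x'−y'| − 1/√(|x'−y'|²+ε²L²) ] for all x' ≠ y' and all ε > 0. -/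

import Mathlib

open MeasureTheory Real

noncomputable section

private lemma sqrt_aux {r s t M : ℝ} (hr : 0 < r) (hs : 0 ≤ s) (ht : 0 ≤ t) (hsM : s ≤ M) (htM : t ≤ M) :
    |1 / Real.sqrt (r^2 + s) - 1 / Real.sqrt (r^2 + t)| ≤ 1 / r - 1 / Real.sqrt (r^2 + M) := by
  have h1 : ∀ u : ℝ, 0 ≤ u → u ≤ M →
      1 / Real.sqrt (r^2+M) ≤ 1 / Real.sqrt (r^2+u) ∧ 1 / Real.sqrt (r^2+u) ≤ 1 / r := by
    intro u hu huM
    have hru : 0 < r^2 + u := by positivity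
    constructor
    · exact one_div_le_one_div_of_le (Real.sqrt_pos.2 hru) (Real.sqrt_le_sqrt (by linarith))
    · refine one_div_le_one_div_of_le hr ?_
      rw [show r = Real.sqrt (r^2) by rw [Real.sqrt_sq hr.le]]
      exact Real.sqrt_le_sqrt (by nlinarith [Real.sq_sqrt (show (0:ℝ) ≤ r^2 by positivity)])
  obtain ⟨a1, a2⟩ := h1 s hs hsM
  obtain ⟨b1, b2⟩ := h1 t ht htM
  rw [abs_le]; constructor <;> linarith

private lemma sqrt_mono' {r M M' : ℝ} (hr : 0 < r) (hM : 0 ≤ M) (hMM : M ≤ M') :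
    1 / Real.sqrt (r^2 + M') ≤ 1 / Real.sqrt (r^2 + M) :=
  one_div_le_one_div_of_le (Real.sqrt_pos.2 (by positivity)) (Real.sqrt_le_sqrt (by linarith))

private lemma per_int (f : EuclideanSpace ℝ (Fin 2) → ℝ)
    (hper : ∀ (y : EuclideanSpace ℝ (Fin 2)) (i : Fin 2),
      f (y + EuclideanSpace.single i 1) = f y)
    (i : Fin 2) (n : ℤ) : ∀ y, f (y + (n : ℝ) • EuclideanSpace.single i 1) = f y := by
  induction n using Int.induction_on with
  | zero => simp
  | succ k ih =>
      intro y
      have h1 : y + ((k : ℤ) + 1 : ℝ) • EuclideanSpace.single i 1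
          = (y + ((k : ℤ) : ℝ) • EuclideanSpace.single i 1) + EuclideanSpace.single i 1 := by
        push_cast; module
      push_cast at h1 ⊢
      rw [h1, hper]
      exact_mod_cast ih y
  | pred k ih =>
      intro y
      have h1 : y + (-(k : ℤ) : ℝ) • EuclideanSpace.single i 1
          = (y + (-(k : ℤ) - 1 : ℝ) • EuclideanSpace.single i 1) + EuclideanSpace.single i 1 := by
        push_cast; module
      push_cast at h1 ⊢
      have h2 := ih y
      push_cast at h2
      rw [← h2, ← hper (y + (-(k:ℝ) - 1) • EuclideanSpace.single i 1) i, ← h1]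

private lemma reduce (f : EuclideanSpace ℝ (Fin 2) → ℝ)
    (hper : ∀ (y : EuclideanSpace ℝ (Fin 2)) (i : Fin 2),
      f (y + EuclideanSpace.single i 1) = f y) (u : EuclideanSpace ℝ (Fin 2)) :
    ∃ u₀ : EuclideanSpace ℝ (Fin 2), f u₀ = f u ∧ ∀ i : Fin 2, u₀ i = Int.fract (u i) := by
  refine ⟨u - (⌊u 0⌋ : ℝ) • EuclideanSpace.single 0 1 - (⌊u 1⌋ : ℝ) • EuclideanSpace.single 1 1,
    ?_, ?_⟩
  · have h1 : u = ((u - (⌊u 0⌋ : ℝ) • EuclideanSpace.single 0 1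
        - (⌊u 1⌋ : ℝ) • EuclideanSpace.single 1 1)
        + (⌊u 1⌋ : ℝ) • EuclideanSpace.single 1 1) + (⌊u 0⌋ : ℝ) • EuclideanSpace.single 0 1 := by
      module
    conv_rhs => rw [h1]
    rw [per_int f hper 0 ⌊u 0⌋, per_int f hper 1 ⌊u 1⌋]
  · intro i
    simp only [PiLp.sub_apply, PiLp.smul_apply, EuclideanSpace.single_apply, smul_eq_mul,
      Int.fract]
    fin_cases i <;> beta_reduce <;> norm_num <;> exact (Int.self_sub_floor _)

private lemma diff_bound (f : EuclideanSpace ℝ (Fin 2) → ℝ) (hf : Differentiable ℝ f)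
    (ℓ : ℝ) (hℓ : ∀ x, ‖fderiv ℝ f x‖ ≤ ℓ)
    (hper : ∀ (y : EuclideanSpace ℝ (Fin 2)) (i : Fin 2),
      f (y + EuclideanSpace.single i 1) = f y)
    (u v : EuclideanSpace ℝ (Fin 2)) : |f u - f v| ≤ 2 * ℓ := by
  have hℓ0 : 0 ≤ ℓ := le_trans (norm_nonneg _) (hℓ 0)
  obtain ⟨u₀, hu₀, hu₀c⟩ := reduce f hper u
  obtain ⟨v₀, hv₀, hv₀c⟩ := reduce f hper v
  have hlip : ‖f u₀ - f v₀‖ ≤ ℓ * ‖u₀ - v₀‖ :=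
    (convex_univ : Convex ℝ (Set.univ : Set (EuclideanSpace ℝ (Fin 2)))).norm_image_sub_le_of_norm_fderiv_le
      (fun x _ => hf x) (fun x _ => hℓ x) (Set.mem_univ v₀) (Set.mem_univ u₀)
  have hn : ‖u₀ - v₀‖ ≤ 2 := by
    rw [EuclideanSpace.norm_eq]
    have hc : ∀ i : Fin 2, ((u₀ - v₀) i)^2 ≤ 1 := by
      intro i
      have h1 : (u₀ - v₀) i = Int.fract (u i) - Int.fract (v i) := by
        simp [PiLp.sub_apply, hu₀c i, hv₀c i]
      rw [h1]
      nlinarith [Int.fract_nonneg (u i), Int.fract_lt_one (u i),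
        Int.fract_nonneg (v i), Int.fract_lt_one (v i)]
    calc Real.sqrt (∑ i : Fin 2, ‖(u₀ - v₀) i‖^2) ≤ Real.sqrt 4 := by
          apply Real.sqrt_le_sqrt
          have := hc 0; have := hc 1
          simp only [Fin.sum_univ_two, Real.norm_eq_abs, sq_abs]
          linarith
      _ = 2 := by rw [show (4:ℝ) = 2^2 by norm_num, Real.sqrt_sq (by norm_num)]
  calc |f u - f v| = ‖f u₀ - f v₀‖ := by rw [hu₀, hv₀]; rfl
    _ ≤ ℓ * ‖u₀ - v₀‖ := hlip
    _ ≤ ℓ * 2 := by nlinarith [norm_nonneg (u₀ - v₀)]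
    _ = 2 * ℓ := by ring

/-- The surface normal vector `n(x') = (−∇f(x'), 1) ∈ ℝ³`. -/
def surfNormal (f : EuclideanSpace ℝ (Fin 2) → ℝ) (x : EuclideanSpace ℝ (Fin 2)) :
    Fin 3 → ℝ := fun i =>
  if h : (i : ℕ) < 2 then -(fderiv ℝ f x (EuclideanSpace.single ⟨i, h⟩ 1)) else 1

private lemma normal_bound (f : EuclideanSpace ℝ (Fin 2) → ℝ)
    (ℓ : ℝ) (hℓ : ∀ x, ‖fderiv ℝ f x‖ ≤ ℓ) (u : EuclideanSpace ℝ (Fin 2)) :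
    ∑ i : Fin 3, surfNormal f u i ^ 2 ≤ 1 + 2 * ℓ^2 := by
  have hℓ0 : 0 ≤ ℓ := le_trans (norm_nonneg _) (hℓ 0)
  rw [Fin.sum_univ_three]
  simp only [surfNormal]
  norm_num
  have h0 := (fderiv ℝ f u).le_opNorm (EuclideanSpace.single (0 : Fin 2) 1)
  have h1 := (fderiv ℝ f u).le_opNorm (EuclideanSpace.single (1 : Fin 2) 1)
  rw [EuclideanSpace.norm_single, Real.norm_eq_abs] at h0 h1
  norm_num at h0 h1
  have := hℓ u
  nlinarith [abs_nonneg (fderiv ℝ f u (EuclideanSpace.single (0:Fin 2) 1)),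
    abs_nonneg (fderiv ℝ f u (EuclideanSpace.single (1:Fin 2) 1)),
    sq_abs (fderiv ℝ f u (EuclideanSpace.single (0:Fin 2) 1)),
    sq_abs (fderiv ℝ f u (EuclideanSpace.single (1:Fin 2) 1)),
    norm_nonneg (fderiv ℝ f u)]

set_option maxHeartbeats 1000000 in
/-- Kernel bound: for `f` `Q`-periodic with `|∇f| ≤ ℓ` and `a > 0`, the matrix kernel
`Γ_ε(x',y') = (2πε)⁻¹ [ n(y'/ε)⊗n(x'/ε)/√(|x'−y'|²+ε²|f(x'/ε)−f(y'/ε)|²)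
  − n(y'/ε)⊗n(x'/ε)/√(|x'−y'|²+ε²|a+f(x'/ε)−f(y'/ε)|²) ]` satisfies
`|Γ_ε(x',y')| ≤ (L/(2πε)) (1/|x'−y'| − 1/√(|x'−y'|²+ε²L²))` for some `L = L(ℓ,a) > 0`,
all `x' ≠ y'` and all `ε > 0` (Frobenius norm on matrices). -/
theorem stmt19 (f : EuclideanSpace ℝ (Fin 2) → ℝ) (hf : Differentiable ℝ f)
    (ℓ : ℝ) (hℓ : ∀ x, ‖fderiv ℝ f x‖ ≤ ℓ)
    (hper : ∀ (y : EuclideanSpace ℝ (Fin 2)) (i : Fin 2),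
      f (y + EuclideanSpace.single i 1) = f y)
    (a : ℝ) (ha : 0 < a) :
    ∃ L > 0, ∀ ε > (0 : ℝ), ∀ x y : EuclideanSpace ℝ (Fin 2), x ≠ y →
      Real.sqrt (∑ i : Fin 3, ∑ j : Fin 3,
          ((2 * π * ε)⁻¹ * (surfNormal f (ε⁻¹ • y) i * surfNormal f (ε⁻¹ • x) j) *
            (1 / Real.sqrt (‖x - y‖ ^ 2 + ε ^ 2 * (f (ε⁻¹ • x) - f (ε⁻¹ • y)) ^ 2)
              - 1 / Real.sqrt (‖x - y‖ ^ 2 + ε ^ 2 * (a + f (ε⁻¹ • x) - f (ε⁻¹ • y)) ^ 2))) ^ 2)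
        ≤ L / (2 * π * ε) * (1 / ‖x - y‖ - 1 / Real.sqrt (‖x - y‖ ^ 2 + ε ^ 2 * L ^ 2)) := by
  have hℓ0 : 0 ≤ ℓ := le_trans (norm_nonneg _) (hℓ 0)
  set L : ℝ := 1 + 2 * ℓ^2 + 2 * ℓ + a with hLdef
  have hL0 : 0 < L := by nlinarith [sq_nonneg ℓ]
  refine ⟨L, hL0, ?_⟩
  intro ε hε x y hxy
  set r : ℝ := ‖x - y‖ with hrdef
  have hr0 : 0 < r := by
    rw [hrdef]
    exact norm_sub_pos_iff.2 hxy
  set c : ℝ := (2 * π * ε)⁻¹ with hcdef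
  have hc0 : 0 ≤ c := by
    rw [hcdef]
    positivity
  set d : ℝ := f (ε⁻¹ • x) - f (ε⁻¹ • y) with hddef
  have hdb : |d| ≤ 2 * ℓ := diff_bound f hf ℓ hℓ hper _ _
  set N : Fin 3 → ℝ := surfNormal f (ε⁻¹ • y) with hNdef
  set M : Fin 3 → ℝ := surfNormal f (ε⁻¹ • x) with hMdef
  set D : ℝ := 1 / Real.sqrt (r ^ 2 + ε ^ 2 * d ^ 2)
      - 1 / Real.sqrt (r ^ 2 + ε ^ 2 * (a + d) ^ 2) with hDdef
  have key : (∑ i : Fin 3, ∑ j : Fin 3, (c * (N i * M j) * D)^2)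
      = (c * D)^2 * ((∑ i : Fin 3, N i ^ 2) * (∑ j : Fin 3, M j ^ 2)) := by
    rw [Finset.sum_mul_sum, Finset.mul_sum]
    refine Finset.sum_congr rfl fun i _ => ?_
    rw [Finset.mul_sum]
    exact Finset.sum_congr rfl fun j _ => by ring
  have hgoal_eq : (a + f (ε⁻¹ • x) - f (ε⁻¹ • y)) = a + d := by rw [hddef]; ring
  have hA : (0:ℝ) ≤ 1 + 2 * ℓ^2 := by positivity
  have hSN : ∑ i : Fin 3, N i ^ 2 ≤ 1 + 2 * ℓ^2 := normal_bound f ℓ hℓ _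
  have hSM : ∑ j : Fin 3, M j ^ 2 ≤ 1 + 2 * ℓ^2 := normal_bound f ℓ hℓ _
  have hSN0 : (0:ℝ) ≤ ∑ i : Fin 3, N i ^ 2 := Finset.sum_nonneg fun i _ => sq_nonneg _
  have hSM0 : (0:ℝ) ≤ ∑ j : Fin 3, M j ^ 2 := Finset.sum_nonneg fun j _ => sq_nonneg _
  -- bound on |D|
  have hDb : |D| ≤ 1 / r - 1 / Real.sqrt (r^2 + ε^2 * (a + 2*ℓ)^2) := by
    rw [hDdef]
    apply sqrt_aux hr0 (by positivity) (by positivity)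
    · have h : d^2 ≤ (a + 2*ℓ)^2 := by
        nlinarith [sq_abs d, abs_nonneg d, hdb, hℓ0, ha.le]
      exact mul_le_mul_of_nonneg_left h (sq_nonneg ε)
    · have h : (a + d)^2 ≤ (a + 2*ℓ)^2 := by
        nlinarith [(abs_le.1 hdb).1, (abs_le.1 hdb).2, ha.le, hℓ0]
      exact mul_le_mul_of_nonneg_left h (sq_nonneg ε)
  have hmono : 1 / Real.sqrt (r^2 + ε^2 * L^2) ≤ 1 / Real.sqrt (r^2 + ε^2 * (a + 2*ℓ)^2) := by
    apply sqrt_mono' hr0 (by positivity)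
    have h1 : (a + 2*ℓ)^2 ≤ L^2 := by nlinarith [sq_nonneg ℓ, hℓ0, ha.le]
    exact mul_le_mul_of_nonneg_left h1 (sq_nonneg ε)
  have hbr0 : (0:ℝ) ≤ 1 / r - 1 / Real.sqrt (r^2 + ε^2 * L^2) := by
    have : 1 / Real.sqrt (r^2 + ε^2*L^2) ≤ 1 / r := by
      refine one_div_le_one_div_of_le hr0 ?_
      rw [show r = Real.sqrt (r^2) by rw [Real.sqrt_sq hr0.le]]
      exact Real.sqrt_le_sqrt (by nlinarith [Real.sq_sqrt (show (0:ℝ) ≤ r^2 by positivity), sq_nonneg (ε*L)])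
    linarith
  have hDb2 : |D| ≤ 1 / r - 1 / Real.sqrt (r^2 + ε^2 * L^2) := le_trans hDb (by linarith)
  -- put everything together
  rw [hgoal_eq]
  show Real.sqrt (∑ i : Fin 3, ∑ j : Fin 3, (c * (N i * M j) * D)^2)
      ≤ L / (2 * π * ε) * (1 / r - 1 / Real.sqrt (r^2 + ε^2 * L^2))
  rw [key, Real.sqrt_mul (sq_nonneg _), Real.sqrt_sq_eq_abs]
  have hsqrtP : Real.sqrt ((∑ i : Fin 3, N i ^ 2) * (∑ j : Fin 3, M j ^ 2)) ≤ 1 + 2 * ℓ^2 := by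
    calc Real.sqrt ((∑ i : Fin 3, N i ^ 2) * (∑ j : Fin 3, M j ^ 2))
        ≤ Real.sqrt ((1 + 2 * ℓ^2) * (1 + 2 * ℓ^2)) :=
          Real.sqrt_le_sqrt (mul_le_mul hSN hSM hSM0 hA)
      _ = 1 + 2 * ℓ^2 := Real.sqrt_mul_self hA
  have habs : |c * D| = c * |D| := by rw [abs_mul, abs_of_nonneg hc0]
  rw [habs]
  have hLdiv : L / (2 * π * ε) = c * L := by rw [hcdef]; field_simp
  rw [hLdiv]
  calc c * |D| * Real.sqrt ((∑ i : Fin 3, N i ^ 2) * (∑ j : Fin 3, M j ^ 2))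
      ≤ c * |D| * (1 + 2 * ℓ^2) := by
        apply mul_le_mul_of_nonneg_left hsqrtP (by positivity)
    _ ≤ c * (1 / r - 1 / Real.sqrt (r^2 + ε^2 * L^2)) * (1 + 2 * ℓ^2) := by
        apply mul_le_mul_of_nonneg_right (mul_le_mul_of_nonneg_left hDb2 hc0) hA
    _ ≤ c * L * (1 / r - 1 / Real.sqrt (r^2 + ε^2 * L^2)) := by
        have hAL : 1 + 2 * ℓ^2 ≤ L := by nlinarith
        nlinarith [mul_nonneg hc0 hbr0]

end
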